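/- For every integer n ≥ 1, the polynomial T_n(x) is symmetric: T(n,k) = T(n, 2n−k) for all 1 ≤ k ≤ 2n−1. -/
import Mathlib


/-- The numbers T(n,k) defined by T(1,1) = 1, T(1,k) = 0 for k ≠ 1, and the
recurrence T(n+1,k) = k·T(n,k) + T(n,k-1) + (2n-k+2)·T(n,k-2) for n ≥ 1.
(The value at n = 0 encodes T_0(x) = 1.) -/
def Tc : ℕ → ℤ → ℤ
  | 0, k => if k = 0 then 1 else 0
  | 1, k => if k = 1 then 1 else 0
  | (n+2), k => k * Tc (n+1) k + Tc (n+1) (k-1) + (2*((n : ℤ)+1) - k + 2) * Tc (n+1) (k-2)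

/-- The polynomial T_n(x) = ∑_{k=1}^{2n-1} T(n,k) x^k for n ≥ 1, with T_0(x) = 1. -/
noncomputable def Tpoly (n : ℕ) : Polynomial ℤ :=
  if n = 0 then 1 else ∑ k ∈ Finset.Icc 1 (2*n - 1), Polynomial.C (Tc n k) * Polynomial.X ^ k

/-- For n ≥ 1, the polynomial T_n(x) is symmetric: T(n,k) = T(n,2n-k) for
all 1 ≤ k ≤ 2n-1. -/

lemma Tc_symm (n : ℕ) : ∀ k : ℤ, Tc (n+1) k = Tc (n+1) (2*((n:ℤ)+1) - k) := by
  induction n with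
  | zero =>
    intro k
    simp only [Tc, Nat.cast_zero]
    split_ifs with h1 h2 h2 <;> omega
  | succ n ih =>
    intro k
    have h0 := ih k
    have h1 := ih (k-1)
    have h2 := ih (k-2)
    simp only [Tc]
    push_cast at *
    have e0 : 2*((n:ℤ)+1+1) - k - 2 = 2*((n:ℤ)+1) - k := by ring
    have e1 : 2*((n:ℤ)+1+1) - k - 1 = 2*((n:ℤ)+1) - (k-1) := by ring
    have e2 : 2*((n:ℤ)+1+1) - k = 2*((n:ℤ)+1) - (k-2) := by ring
    rw [e0, e1, e2, ← h0, ← h1, ← h2]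
    ring

theorem stmt6 (n k : ℕ) (hn : 1 ≤ n) (hk1 : 1 ≤ k) (hk2 : k ≤ 2*n - 1) :
    Tc n k = Tc n (2*(n : ℤ) - k) := by
  obtain ⟨m, rfl⟩ : ∃ m, n = m + 1 := ⟨n-1, by omega⟩
  have := Tc_symm m k
  push_cast at this ⊢
  convert this using 3 <;> push_cast <;> ring
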